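/- For every n ≥ 1, if m = n + Δ(J_n(1)), then Δ(J_m(1)) = n or Δ(J_m(1)) = n − 1. -/
import Mathlib


/-- The Jaco out-degree function `f`: `f 0 = 0` and, for `n ≥ 1`,
`f n = n - #{k : 1 ≤ k < n ∧ k + f k ≥ n}` (the out-degree of `v_n` in `J_∞(1)`). -/
def jacoF : ℕ → ℕ
  | 0 => 0
  | n + 1 =>
    (n + 1) - ((Finset.range (n + 1)).attach.filter
      (fun a => 1 ≤ a.1 ∧ n + 1 ≤ a.1 + jacoF a.1)).card
  decreasing_by all_goals exact Finset.mem_range.mp a.2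

/-- The in-degree `d⁻(j) = #{i : 1 ≤ i < j ∧ j ≤ i + f i}` of `v_j` in `J_∞(1)`. -/
def jacoDin (j : ℕ) : ℕ := ((Finset.Ico 1 j).filter (fun i => j ≤ i + jacoF i)).card

/-- The degree `d_n(j) = d⁻(j) + #{k : j < k ≤ n ∧ k ≤ j + f j}` of `v_j` in the
underlying undirected graph of the finite Jaco graph `J_n(1)`. -/
def jacoDeg (n j : ℕ) : ℕ :=
  jacoDin j + ((Finset.Ioc j n).filter (fun k => k ≤ j + jacoF j)).card

/-- The maximum degree `Δ(J_n(1)) = max_{1 ≤ j ≤ n} d_n(j)`. -/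
def jacoDelta (n : ℕ) : ℕ := (Finset.Icc 1 n).sup (jacoDeg n)

/-- The Jaconian set `𝕁(J_n(1)) = {j : 1 ≤ j ≤ n ∧ d_n(j) = Δ(J_n(1))}`. -/
def jacoJ (n : ℕ) : Finset ℕ := (Finset.Icc 1 n).filter (fun j => jacoDeg n j = jacoDelta n)

lemma f_succ_eq (n : ℕ) : jacoF (n+1) = (n+1) - jacoDin (n+1) := by
  rw [jacoF, jacoDin]
  congr 1
  rw [Finset.card_filter, Finset.sum_attach (Finset.range (n+1)) (fun a => if 1 ≤ a ∧ n+1 ≤ a + jacoF a then 1 else 0), ← Finset.card_filter]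
  congr 1
  ext i
  simp only [Finset.mem_filter, Finset.mem_range, Finset.mem_Ico]
  omega

lemma din_le (n : ℕ) : jacoDin (n+1) ≤ n := by
  have := Finset.card_filter_le (Finset.Ico 1 (n+1)) (fun i => n+1 ≤ i + jacoF i)
  simpa [jacoDin] using this

lemma din_add_f (n : ℕ) : jacoDin (n+1) + jacoF (n+1) = n+1 := by
  have := f_succ_eq n; have := din_le n; omega

lemma f_pos (n : ℕ) : 1 ≤ jacoF (n+1) := by
  have := f_succ_eq n; have := din_le n; omega

lemma f_le (n : ℕ) : jacoF n ≤ n := by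
  cases n with
  | zero => simp [jacoF]
  | succ k => have := f_succ_eq k; omega

lemma f_mono_step : ∀ n : ℕ, jacoF n ≤ jacoF (n+1) ∧ jacoF (n+1) ≤ jacoF n + 1 := by
  intro n
  induction n using Nat.strong_induction_on with
  | _ n IH =>
    match n with
    | 0 =>
      have h1 : jacoDin 1 = 0 := by simp [jacoDin]
      have h2 := f_succ_eq 0
      have h3 : jacoF 0 = 0 := by simp [jacoF]
      constructor <;> omega
    | n + 1 =>
      -- g is strictly monotone on [0, n+1] thanks to IH
      have hg : ∀ i j : ℕ, i < j → j ≤ n + 1 → i + jacoF i < j + jacoF j := by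
        intro i j hij hj
        induction j with
        | zero => omega
        | succ k IHk =>
          have hk := (IH k (by omega)).1
          rcases Nat.lt_or_ge i k with h | h
          · have := IHk (by omega) (by omega); omega
          · have : i = k := by omega
            subst this; omega
      -- split jacoDin (n+2)
      have hsplit : jacoDin (n+2) =
          ((Finset.Ico 1 (n+1)).filter (fun i => n+2 ≤ i + jacoF i)).card + 1 := by
        rw [jacoDin]
        have : Finset.Ico 1 (n+2) = insert (n+1) (Finset.Ico 1 (n+1)) := by
          ext x; simp [Finset.mem_Ico]; omega
        rw [this, Finset.filter_insert]
        have hf := f_pos n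
        rw [if_pos (by omega), Finset.card_insert_of_notMem (by simp)]
      -- the two filters over Ico 1 (n+1) differ by at most the singleton g i = n+1
      have hsub : ((Finset.Ico 1 (n+1)).filter (fun i => n+2 ≤ i + jacoF i)).card ≤ jacoDin (n+1) := by
        apply Finset.card_le_card
        intro x hx
        simp only [jacoDin, Finset.mem_filter, Finset.mem_Ico] at hx ⊢
        omega
      have hsub2 : jacoDin (n+1) ≤ ((Finset.Ico 1 (n+1)).filter (fun i => n+2 ≤ i + jacoF i)).card + 1 := by
        have hdecomp : (Finset.Ico 1 (n+1)).filter (fun i => (n:ℕ)+1 ≤ i + jacoF i)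
            ⊆ ((Finset.Ico 1 (n+1)).filter (fun i => n+2 ≤ i + jacoF i)) ∪
              ((Finset.Ico 1 (n+1)).filter (fun i => i + jacoF i = n+1)) := by
          intro x hx
          simp only [Finset.mem_filter, Finset.mem_Ico, Finset.mem_union] at hx ⊢
          omega
        have hcard1 : ((Finset.Ico 1 (n+1)).filter (fun i => i + jacoF i = n+1)).card ≤ 1 := by
          apply Finset.card_le_one.mpr
          intro a ha b hb
          simp only [Finset.mem_filter, Finset.mem_Ico] at ha hb
          by_contra hne
          rcases Nat.lt_or_ge a b with h | h
          · have := hg a b h (by omega); omega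
          · have := hg b a (by omega) (by omega); omega
        calc jacoDin (n+1) ≤ _ := Finset.card_le_card hdecomp
          _ ≤ _ := (Finset.card_union_le _ _).trans (by omega)
      have e1 := f_succ_eq n
      have e2 : jacoF (n+2) = (n+2) - jacoDin (n+2) := f_succ_eq (n+1)
      have hle2 : jacoDin (n+2) ≤ n+1 := din_le (n+1)
      show jacoF (n+1) ≤ jacoF (n+2) ∧ jacoF (n+2) ≤ jacoF (n+1) + 1
      have := din_le n
      have := din_le (n+1)
      omega

lemma f_mono : Monotone jacoF :=
  monotone_nat_of_le_succ (fun n => (f_mono_step n).1)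

lemma g_strictMono : StrictMono (fun j => j + jacoF j) := by
  apply strictMono_nat_of_lt_succ
  intro n
  have := (f_mono_step n).1
  show n + jacoF n < (n+1) + jacoF (n+1)
  omega

/-- D n = number of j ≥ 1 with j + f j ≤ n -/
def jacoD (n : ℕ) : ℕ := ((Finset.Icc 1 n).filter (fun j => j + jacoF j ≤ n)).card

lemma jacoS_eq (n : ℕ) :
    (Finset.Icc 1 n).filter (fun j => j + jacoF j ≤ n) = Finset.Icc 1 (jacoD n) := by
  set S := (Finset.Icc 1 n).filter (fun j => j + jacoF j ≤ n) with hS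
  rcases Finset.eq_empty_or_nonempty S with h | h
  · rw [jacoD, ← hS, h]; simp
  · have hM := Finset.max'_mem S h
    set M := S.max' h with hMdef
    have hSM : S = Finset.Icc 1 M := by
      ext x
      simp only [hS, Finset.mem_filter, Finset.mem_Icc] at hM ⊢
      constructor
      · intro hx
        exact ⟨hx.1.1, Finset.le_max' S x (by simp [hS, Finset.mem_filter, Finset.mem_Icc]; omega)⟩
      · intro hx
        have hgx : x + jacoF x ≤ M + jacoF M := by
          rcases Nat.lt_or_ge x M with h' | h'
          · exact le_of_lt (g_strictMono h')
          · have : x = M := by omega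
            rw [this]
        refine ⟨⟨hx.1, by omega⟩, by omega⟩
    have : jacoD n = M := by rw [jacoD, ← hS, hSM, Nat.card_Icc]; omega
    rw [hSM, this]

lemma jacoD_le (n : ℕ) : jacoD n ≤ n := by
  have h := jacoS_eq n
  have : jacoD n ≤ (Finset.Icc 1 n).card := by
    rw [jacoD]; exact Finset.card_filter_le _ _
  rw [Nat.card_Icc] at this; omega

lemma mem_S_iff (n j : ℕ) : j ∈ Finset.Icc 1 (jacoD n) ↔ 1 ≤ j ∧ j ≤ n ∧ j + jacoF j ≤ n := by
  rw [← jacoS_eq]; simp [Finset.mem_filter, Finset.mem_Icc]; omega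

lemma jacoD_mono : Monotone jacoD := by
  intro a b hab
  rw [jacoD, jacoD]
  apply Finset.card_le_card
  intro x hx
  simp only [Finset.mem_filter, Finset.mem_Icc] at hx ⊢
  omega

lemma f_succ_D (n : ℕ) : jacoF (n+1) = jacoD n + 1 := by
  have hdin : jacoDin (n+1) = n - jacoD n := by
    rw [jacoDin]
    have hsplit := Finset.card_filter_add_card_filter_not
      (s := Finset.Ico 1 (n+1)) (p := fun i => n+1 ≤ i + jacoF i)
    have hD : ((Finset.Ico 1 (n+1)).filter (fun i => ¬ (n+1 ≤ i + jacoF i))).card = jacoD n := by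
      rw [jacoD]; congr 1; ext x
      simp only [Finset.mem_filter, Finset.mem_Ico, Finset.mem_Icc]
      omega
    have hcard : (Finset.Ico 1 (n+1)).card = n := by simp
    omega
  have := f_succ_eq n
  have := jacoD_le n
  omega


lemma din_eq (j : ℕ) (hj : 1 ≤ j) : jacoDin j = j - jacoF j := by
  obtain ⟨k, rfl⟩ := Nat.exists_eq_add_of_le hj
  have := din_add_f k
  have := f_le (k+1)
  rw [Nat.add_comm 1 k] at *
  omega

lemma deg_eq (m j : ℕ) (h1 : 1 ≤ j) (h2 : j ≤ m) :
    jacoDeg m j = min (j + jacoF j) m - jacoF j := by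
  rw [jacoDeg, din_eq j h1]
  have hfilter : (Finset.Ioc j m).filter (fun k => k ≤ j + jacoF j)
      = Finset.Ioc j (min (j + jacoF j) m) := by
    ext x
    simp only [Finset.mem_filter, Finset.mem_Ioc, le_min_iff, Nat.lt_min]
    omega
  rw [hfilter, Nat.card_Ioc]
  have := f_le j
  omega

lemma delta_eq_D (n : ℕ) (hn : 1 ≤ n) : jacoDelta n = jacoD n := by
  rw [jacoDelta]
  apply le_antisymm
  · apply Finset.sup_le
    intro j hj
    simp only [Finset.mem_Icc] at hj
    rw [deg_eq n j hj.1 hj.2]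
    rcases le_or_gt (j + jacoF j) n with h | h
    · -- value is j, and j ≤ D n since j ∈ S
      have : j ∈ Finset.Icc 1 (jacoD n) := (mem_S_iff n j).mpr ⟨hj.1, hj.2, h⟩
      simp only [Finset.mem_Icc] at this
      have := f_le j
      omega
    · -- value is n - f j; show f j ≥ n - D n
      set t := jacoD n with ht
      have hfj : n ≤ t + jacoF j := by
        rcases le_or_gt j (t+1) with h' | h'
        · -- f j ≥ j + f j - j > n - j ≥ n - t - 1, i.e. f j ≥ n - j + 1 ≥ n - t
          omega
        · -- j ≥ t+2 > t+1, f j ≥ f (t+1) ≥ n + 1 - (t+1)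
          have hft : n + 1 ≤ (t+1) + jacoF (t+1) := by
            by_contra hcon
            push_neg at hcon
            have : t + 1 ∈ Finset.Icc 1 (jacoD n) :=
              (mem_S_iff n (t+1)).mpr ⟨by omega, by omega, by omega⟩
            simp only [Finset.mem_Icc] at this
            omega
          have := f_mono (show t+1 ≤ j by omega)
          omega
      omega
  · rcases Nat.eq_zero_or_pos (jacoD n) with h | h
    · simp [h]
    · have := (mem_S_iff n (jacoD n)).mp (by simp [Finset.mem_Icc]; omega)
      have hdeg : jacoDeg n (jacoD n) = jacoD n := by
        rw [deg_eq n (jacoD n) (by omega) (by omega)]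
        have := f_le (jacoD n)
        omega
      calc jacoD n = jacoDeg n (jacoD n) := hdeg.symm
        _ ≤ _ := Finset.le_sup (by simp [Finset.mem_Icc]; omega)


/-- If `m = n + Δ(J_n(1))`, then `Δ(J_m(1)) = n` or `Δ(J_m(1)) = n - 1`. -/
theorem stmt_11 (n m : ℕ) (hn : 1 ≤ n) (hm : m = n + jacoDelta n) :
    jacoDelta m = n ∨ jacoDelta m = n - 1 := by
  rw [delta_eq_D n hn] at hm
  have hm1 : 1 ≤ m := by omega
  rw [delta_eq_D m hm1]
  -- upper bound : jacoD m ≤ n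
  have hub : jacoD m ≤ n := by
    by_contra hcon
    push_neg at hcon
    have hmem : n + 1 ∈ Finset.Icc 1 (jacoD m) := by simp [Finset.mem_Icc]; omega
    have := (mem_S_iff m (n+1)).mp hmem
    have hf := f_succ_D n
    omega
  -- lower bound : n - 1 ≤ jacoD m
  have hlb : n - 1 ≤ jacoD m := by
    rcases Nat.lt_or_ge n 2 with h2 | h2
    · omega
    · obtain ⟨k, hk⟩ : ∃ k, n - 1 = k + 1 := ⟨n - 2, by omega⟩
      have hfk : jacoF (k+1) = jacoD k + 1 := f_succ_D k
      have hmono := jacoD_mono (show k ≤ n by omega)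
      have hmem : n - 1 ∈ Finset.Icc 1 (jacoD m) := by
        rw [mem_S_iff]
        rw [hk]
        refine ⟨by omega, by omega, by omega⟩
      simp only [Finset.mem_Icc] at hmem
      omega
  omega
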